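/- For w ∈ ℝ², let ⟨w⟩ = (1+|w|²)^{1/2}. Then for all x, y ∈ ℝ², ∫_{ℝ²} ⟨w⟩^{−2−ε} |x−w|^{−1} |w−y|^{−1} dw ≲ 1 + log⁻|x−y|, where log⁻(r) = max(−log r, 0), with constant depending only on ε > 0. -/

import Mathlib

open MeasureTheory Measure Metric Set
open scoped ENNReal

noncomputable abbrev E2 := EuclideanSpace ℝ (Fin 2)

lemma lintegral_norm_polar (f : ℝ → ℝ≥0∞) (hf : Measurable f) :
    ∫⁻ x : E2, f ‖x‖ = (2 * volume (ball (0:E2) 1)) * ∫⁻ y in Ioi (0:ℝ), ENNReal.ofReal y * f y := by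
  have h2 := (volume : Measure E2).measurePreserving_homeomorphUnitSphereProd
  calc ∫⁻ x : E2, f ‖x‖
      = ∫⁻ x : ({(0:E2)}ᶜ : Set E2), f ‖(x:E2)‖ ∂((volume : Measure E2).comap (↑)) := by
        rw [lintegral_subtype_comap (measurableSet_singleton _).compl fun x => f ‖x‖,
          restrict_compl_singleton]
    _ = ∫⁻ p : sphere (0:E2) 1 × Ioi (0:ℝ), f p.2
          ∂((volume : Measure E2).toSphere.prod (volumeIoiPow (Module.finrank ℝ E2 - 1))) :=
        by
          rw [← h2.lintegral_comp_emb (Homeomorph.measurableEmbedding _) fun p => f p.2]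
          simp [homeomorphUnitSphereProd_apply_snd_coe]
    _ = (volume : Measure E2).toSphere univ *
          ∫⁻ y : Ioi (0:ℝ), f y ∂(volumeIoiPow (Module.finrank ℝ E2 - 1)) := by
        rw [lintegral_prod (fun p : sphere (0:E2) 1 × Ioi (0:ℝ) => f ↑p.2)
          (((hf.comp measurable_subtype_coe).comp measurable_snd).aemeasurable)]
        simp [lintegral_const, mul_comm]
    _ = (2 * volume (ball (0:E2) 1)) * ∫⁻ y in Ioi (0:ℝ), ENNReal.ofReal y * f y := by
        rw [toSphere_apply_univ]
        congr 1
        · simp [finrank_euclideanSpace_fin]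
        · rw [show Module.finrank ℝ E2 - 1 = 1 by simp [finrank_euclideanSpace_fin]]
          rw [volumeIoiPow]
          rw [lintegral_withDensity_eq_lintegral_mul _
            (by fun_prop : Measurable fun r : Ioi (0:ℝ) => ENNReal.ofReal (r.1 ^ 1))
            (show Measurable fun y : Ioi (0:ℝ) => f ↑y from hf.comp measurable_subtype_coe)]
          simp only [Pi.mul_apply]
          rw [lintegral_subtype_comap measurableSet_Ioi
            (fun y : ℝ => ENNReal.ofReal (y ^ 1) * f y)]
          simp [pow_one]

/-- restrict an `Ioi 0` lintegral with an indicator of a measurable set. -/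
lemma lintegral_Ioi_indicator (S : Set ℝ) (hS : MeasurableSet S) (g : ℝ → ℝ≥0∞) :
    ∫⁻ y in Ioi (0:ℝ), S.indicator g y = ∫⁻ y in S ∩ Ioi (0:ℝ), g y := by
  rw [lintegral_indicator hS, restrict_restrict hS]

lemma lintegral_ball_inv_norm {r : ℝ} (hr : 0 < r) :
    ∫⁻ w in ball (0:E2) r, ENNReal.ofReal ‖w‖⁻¹ =
      (2 * volume (ball (0:E2) 1)) * ENNReal.ofReal r := by
  set f : ℝ → ℝ≥0∞ := (Iio r).indicator (fun y => ENNReal.ofReal y⁻¹) with hfdef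
  have hf : Measurable f := Measurable.indicator (by fun_prop) measurableSet_Iio
  have h := lintegral_norm_polar f hf
  have h1 : ∫⁻ x : E2, f ‖x‖ = ∫⁻ w in ball (0:E2) r, ENNReal.ofReal ‖w‖⁻¹ := by
    have hfun : (fun x : E2 => f ‖x‖) = (ball (0:E2) r).indicator (fun w => ENNReal.ofReal ‖w‖⁻¹) := by
      funext x
      by_cases hx : ‖x‖ < r <;>
        simp [hfdef, indicator_apply, mem_ball_zero_iff, hx]
    rw [show ∫⁻ x : E2, f ‖x‖ = ∫⁻ x : E2, (fun x : E2 => f ‖x‖) x from rfl, hfun,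
      lintegral_indicator measurableSet_ball]
  have h2 : ∫⁻ y in Ioi (0:ℝ), ENNReal.ofReal y * f y = ENNReal.ofReal r := by
    have : ∀ y : ℝ, ENNReal.ofReal y * f y = (Iio r).indicator
        (fun y => ENNReal.ofReal y * ENNReal.ofReal y⁻¹) y := by
      intro y
      simp only [hfdef, indicator_apply]
      split <;> simp
    simp only [this]
    rw [lintegral_Ioi_indicator _ measurableSet_Iio, Set.Iio_inter_Ioi,
      setLIntegral_congr_fun measurableSet_Ioo
        (fun y hy => ?_), setLIntegral_one, Real.volume_Ioo, sub_zero]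
    rw [← ENNReal.ofReal_mul (le_of_lt hy.1), mul_inv_cancel₀ (ne_of_gt hy.1), ENNReal.ofReal_one]
  rw [h1, h2] at h
  exact h

lemma lintegral_annulus {s : ℝ} (hs : 0 < s) :
    ∫⁻ w in {w : E2 | s ≤ ‖w‖ ∧ ‖w‖ < 1}, ENNReal.ofReal (‖w‖⁻¹ * ‖w‖⁻¹) ≤
      (2 * volume (ball (0:E2) 1)) * ENNReal.ofReal (Real.log s⁻¹) := by
  set f : ℝ → ℝ≥0∞ := (Ico s 1).indicator (fun y => ENNReal.ofReal (y⁻¹ * y⁻¹)) with hfdef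
  have hf : Measurable f := Measurable.indicator (by fun_prop) measurableSet_Ico
  have hSm : MeasurableSet {w : E2 | s ≤ ‖w‖ ∧ ‖w‖ < 1} := by
    have : {w : E2 | s ≤ ‖w‖ ∧ ‖w‖ < 1} = (fun w : E2 => ‖w‖) ⁻¹' (Ico s 1) := rfl
    rw [this]
    exact measurableSet_Ico.preimage (by fun_prop)
  have h := lintegral_norm_polar f hf
  have h1 : ∫⁻ x : E2, f ‖x‖ =
      ∫⁻ w in {w : E2 | s ≤ ‖w‖ ∧ ‖w‖ < 1}, ENNReal.ofReal (‖w‖⁻¹ * ‖w‖⁻¹) := by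
    have hfun : (fun x : E2 => f ‖x‖) = ({w : E2 | s ≤ ‖w‖ ∧ ‖w‖ < 1}).indicator
        (fun w => ENNReal.ofReal (‖w‖⁻¹ * ‖w‖⁻¹)) := by
      funext x
      by_cases hx : s ≤ ‖x‖ ∧ ‖x‖ < 1 <;>
        simp [hfdef, indicator_apply, mem_Ico, mem_setOf_eq, hx]
    rw [show ∫⁻ x : E2, f ‖x‖ = ∫⁻ x : E2, (fun x : E2 => f ‖x‖) x from rfl, hfun,
      lintegral_indicator hSm]
  have h2 : ∫⁻ y in Ioi (0:ℝ), ENNReal.ofReal y * f y ≤ ENNReal.ofReal (Real.log s⁻¹) := by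
    have key : ∀ y : ℝ, ENNReal.ofReal y * f y = (Ico s 1).indicator
        (fun y => ENNReal.ofReal y * ENNReal.ofReal (y⁻¹ * y⁻¹)) y := by
      intro y
      simp only [hfdef, indicator_apply]
      split <;> simp
    simp only [key]
    rw [lintegral_Ioi_indicator _ measurableSet_Ico]
    have hsub : Ico s 1 ∩ Ioi (0:ℝ) = Ico s 1 := by
      apply inter_eq_self_of_subset_left
      intro y hy
      exact lt_of_lt_of_le hs hy.1
    rw [hsub]
    rcases le_or_gt 1 s with hs1 | hs1
    · rw [Ico_eq_empty (by linarith), Measure.restrict_empty, lintegral_zero_measure]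
      exact zero_le
    · have hcong : ∫⁻ y in Ico s 1, ENNReal.ofReal y * ENNReal.ofReal (y⁻¹ * y⁻¹) =
          ∫⁻ y in Ico s 1, ENNReal.ofReal y⁻¹ := by
        apply setLIntegral_congr_fun measurableSet_Ico (fun y hy => ?_)
        have hy0 : 0 < y := lt_of_lt_of_le hs hy.1
        rw [← ENNReal.ofReal_mul hy0.le]
        congr 1
        field_simp
      rw [hcong]
      have hint : IntegrableOn (fun y : ℝ => y⁻¹) (Ico s 1) := by
        apply (ContinuousOn.integrableOn_compact isCompact_Icc ?_).mono_set Ico_subset_Icc_self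
        exact continuousOn_inv₀.mono (fun y hy => ne_of_gt (lt_of_lt_of_le hs hy.1))
      have hpos : 0 ≤ᵐ[volume.restrict (Ico s 1)] fun y : ℝ => y⁻¹ := by
        filter_upwards [ae_restrict_mem measurableSet_Ico] with y hy
        exact inv_nonneg.2 (le_trans hs.le hy.1)
      rw [← ofReal_integral_eq_lintegral_ofReal hint hpos]
      apply ENNReal.ofReal_le_ofReal
      have heq : ∫ y in Ico s 1, y⁻¹ = Real.log s⁻¹ := by
        rw [Measure.restrict_congr_set Ico_ae_eq_Ioc, ← intervalIntegral.integral_of_le hs1.le,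
          integral_inv_of_pos hs one_pos, one_div]
      rw [heq]
  calc ∫⁻ w in {w : E2 | s ≤ ‖w‖ ∧ ‖w‖ < 1}, ENNReal.ofReal (‖w‖⁻¹ * ‖w‖⁻¹)
      = (2 * volume (ball (0:E2) 1)) * ∫⁻ y in Ioi (0:ℝ), ENNReal.ofReal y * f y := by
        rw [← h1, h]
    _ ≤ _ := mul_le_mul_right h2 _

lemma lintegral_Ioo_inv_top : ∫⁻ y in Ioo (0:ℝ) 1, ENNReal.ofReal y⁻¹ = ∞ := by
  by_contra h
  have hfin : HasFiniteIntegral (fun y : ℝ => y⁻¹) (volume.restrict (Ioo 0 1)) := by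
    rw [hasFiniteIntegral_iff_ofReal ?pos]
    case pos =>
      filter_upwards [ae_restrict_mem measurableSet_Ioo] with y hy
      exact inv_nonneg.2 hy.1.le
    exact lt_top_iff_ne_top.2 h
  have hInt : IntegrableOn (fun y : ℝ => y⁻¹) (Ioo (0:ℝ) 1) :=
    ⟨(measurable_inv).aestronglyMeasurable, hfin⟩
  have hrpow : IntegrableOn (fun y : ℝ => y ^ (-1 : ℝ)) (Ioo (0:ℝ) 1) := by
    apply hInt.congr_fun (fun y hy => ?_) measurableSet_Ioo
    rw [show (-1 : ℝ) = ((-1 : ℤ) : ℝ) by norm_num, Real.rpow_intCast, zpow_neg_one]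
  rw [intervalIntegral.integrableOn_Ioo_rpow_iff one_pos] at hrpow
  linarith

lemma lintegral_ball_inv_sq :
    ∫⁻ w in ball (0:E2) 1, ENNReal.ofReal (‖w‖⁻¹ * ‖w‖⁻¹) = ∞ := by
  set f : ℝ → ℝ≥0∞ := (Iio 1).indicator (fun y => ENNReal.ofReal (y⁻¹ * y⁻¹)) with hfdef
  have hf : Measurable f := Measurable.indicator (by fun_prop) measurableSet_Iio
  have h := lintegral_norm_polar f hf
  have h1 : ∫⁻ x : E2, f ‖x‖ = ∫⁻ w in ball (0:E2) 1, ENNReal.ofReal (‖w‖⁻¹ * ‖w‖⁻¹) := by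
    have hfun : (fun x : E2 => f ‖x‖) = (ball (0:E2) 1).indicator
        (fun w => ENNReal.ofReal (‖w‖⁻¹ * ‖w‖⁻¹)) := by
      funext x
      by_cases hx : ‖x‖ < 1 <;> simp [hfdef, indicator_apply, mem_ball_zero_iff, hx]
    rw [show ∫⁻ x : E2, f ‖x‖ = ∫⁻ x : E2, (fun x : E2 => f ‖x‖) x from rfl, hfun,
      lintegral_indicator measurableSet_ball]
  have h2 : ∫⁻ y in Ioi (0:ℝ), ENNReal.ofReal y * f y = ∞ := by
    have key : ∀ y : ℝ, ENNReal.ofReal y * f y = (Iio 1).indicator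
        (fun y => ENNReal.ofReal y * ENNReal.ofReal (y⁻¹ * y⁻¹)) y := by
      intro y
      simp only [hfdef, indicator_apply]
      split <;> simp
    simp only [key]
    rw [lintegral_Ioi_indicator _ measurableSet_Iio, Set.Iio_inter_Ioi]
    rw [setLIntegral_congr_fun measurableSet_Ioo (fun y hy => ?_),
      lintegral_Ioo_inv_top]
    rw [← ENNReal.ofReal_mul hy.1.le]
    congr 1
    field_simp
  rw [h1, h2] at h
  rw [h, ENNReal.mul_top]
  simp only [ne_eq, mul_eq_zero, not_or]
  exact ⟨by norm_num, (measure_ball_pos volume (0:E2) one_pos).ne'⟩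

lemma lintegral_translate (S : Set E2) (hS : MeasurableSet S) (g : E2 → ℝ≥0∞) (z : E2) :
    ∫⁻ w in (fun w : E2 => w - z) ⁻¹' S, g (w - z) = ∫⁻ u in S, g u := by
  have hSm : MeasurableSet ((fun w : E2 => w - z) ⁻¹' S) :=
    hS.preimage (measurable_id.sub measurable_const)
  rw [← lintegral_indicator hS, ← lintegral_indicator hSm]
  have heq : ∀ w : E2, ((fun w : E2 => w - z) ⁻¹' S).indicator (fun w => g (w - z)) w
      = S.indicator g (w - z) := by
    intro w
    by_cases hw : w - z ∈ S <;> simp [indicator_apply, hw, mem_preimage]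
  simp only [heq]
  simpa [sub_eq_add_neg] using lintegral_add_right_eq_self (fun u => S.indicator g u) (-z)

lemma tail_lt_top (ε : ℝ) (hε : 0 < ε) :
    ∫⁻ w : E2, ENNReal.ofReal ((1 + ‖w‖ ^ 2) ^ (-(2 + ε) / 2)) < ∞ := by
  have h : (Module.finrank ℝ E2 : ℝ) < 2 + ε := by
    simp only [finrank_euclideanSpace_fin]
    norm_num
    linarith
  exact (integrable_rpow_neg_one_add_norm_sq (E := E2) (μ := volume) h).lintegral_lt_top

set_option maxHeartbeats 2000000 in
/-- The borderline (k = ℓ = 1, n = 2) two-singularity estimate: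
    ∫_{ℝ²} ⟨w⟩^{−2−ε} |x−w|⁻¹ |w−y|⁻¹ dw ≲ 1 + log⁻|x−y|. -/
theorem two_singularity_log_estimate (ε : ℝ) (hε : 0 < ε) :
    ∃ C : ℝ, 0 < C ∧
      ∀ x y : EuclideanSpace ℝ (Fin 2),
        (∫ w : EuclideanSpace ℝ (Fin 2),
            (1 + ‖w‖ ^ 2) ^ (-(2 + ε) / 2) * ‖x - w‖⁻¹ * ‖w - y‖⁻¹)
          ≤ C * (1 + max (-Real.log ‖x - y‖) 0) := by
  classical
  set V : ℝ≥0∞ := 2 * volume (ball (0:E2) 1) with hVdef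
  have hVtop : V ≠ ∞ := ENNReal.mul_ne_top (by norm_num) measure_ball_lt_top.ne
  set Ct : ℝ≥0∞ := ∫⁻ w : E2, ENNReal.ofReal ((1 + ‖w‖ ^ 2) ^ (-(2 + ε) / 2)) with hCtdef
  have hCttop : Ct ≠ ∞ := (tail_lt_top ε hε).ne
  set K : ℝ≥0∞ := 2 * V + 2 * V * ENNReal.ofReal (Real.log 2) + 2 * Ct with hKdef
  have hKtop : K ≠ ∞ := by
    apply ENNReal.add_ne_top.2
    refine ⟨ENNReal.add_ne_top.2 ⟨ENNReal.mul_ne_top (by norm_num) hVtop,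
      ENNReal.mul_ne_top (ENNReal.mul_ne_top (by norm_num) hVtop) ENNReal.ofReal_ne_top⟩,
      ENNReal.mul_ne_top (by norm_num) hCttop⟩
  set C : ℝ := K.toReal + (2 * V).toReal + 1 with hCdef
  have hC0 : 0 < C := by positivity
  refine ⟨C, hC0, fun x y => ?_⟩
  set f : E2 → ℝ := fun w => (1 + ‖w‖ ^ 2) ^ (-(2 + ε) / 2) * ‖x - w‖⁻¹ * ‖w - y‖⁻¹ with hfdef
  have hf0 : ∀ w, 0 ≤ f w := fun w => by
    have : (0:ℝ) ≤ (1 + ‖w‖ ^ 2) ^ (-(2 + ε) / 2) := Real.rpow_nonneg (by positivity) _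
    positivity
  have hfm : Measurable f := by
    apply Measurable.mul
    apply Measurable.mul
    · exact ((continuous_const.add (continuous_norm.pow 2)).rpow_const
        (fun w : E2 => Or.inl (by positivity : (1 + ‖w‖ ^ 2 : ℝ) ≠ 0))).measurable
    · exact ((measurable_const.sub measurable_id).norm).inv
    · exact ((measurable_id.sub measurable_const).norm).inv
  set m : ℝ := max (-Real.log ‖x - y‖) 0 with hmdef
  have hm0 : 0 ≤ m := le_max_right _ _
  have hg1 : ∀ w : E2, (1 + ‖w‖ ^ 2) ^ (-(2 + ε) / 2) ≤ 1 := fun w =>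
    Real.rpow_le_one_of_one_le_of_nonpos (by nlinarith [sq_nonneg ‖w‖]) (by linarith)
  show ∫ w, f w ≤ C * (1 + m)
  by_cases hxy : x = y
  · -- divergent case: integral is 0 by convention
    have hne : ¬ Integrable f volume := by
      intro hInt
      have h1 : ∫⁻ w, ENNReal.ofReal (f w) < ∞ := by
        have h2 := hInt.2
        rwa [hasFiniteIntegral_iff_ofReal (ae_of_all _ hf0)] at h2
      set c : ℝ := (1 + (‖x‖ + 1) ^ 2) ^ (-(2 + ε) / 2) with hcdef
      have hc : 0 < c := Real.rpow_pos_of_pos (by positivity) _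
      have hlow : ∀ w ∈ ball x 1, ENNReal.ofReal c * ENNReal.ofReal (‖w - x‖⁻¹ * ‖w - x‖⁻¹)
          ≤ ENNReal.ofReal (f w) := by
        intro w hw
        rw [← ENNReal.ofReal_mul hc.le]
        apply ENNReal.ofReal_le_ofReal
        have hwx : ‖w - x‖ ≤ 1 := by
          rw [← dist_eq_norm]; exact (mem_ball.1 hw).le
        have hwn : ‖w‖ ≤ ‖x‖ + 1 := by
          calc ‖w‖ = ‖x + (w - x)‖ := by rw [add_sub_cancel]
            _ ≤ ‖x‖ + ‖w - x‖ := norm_add_le _ _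
            _ ≤ ‖x‖ + 1 := by linarith
        have hcg : c ≤ (1 + ‖w‖ ^ 2) ^ (-(2 + ε) / 2) :=
          Real.rpow_le_rpow_of_nonpos (by positivity)
            (by nlinarith [norm_nonneg w, norm_nonneg x]) (by linarith)
        have hfw : f w = (1 + ‖w‖ ^ 2) ^ (-(2 + ε) / 2) * (‖w - x‖⁻¹ * ‖w - x‖⁻¹) := by
          rw [hfdef]
          simp only
          rw [← hxy, norm_sub_rev x w]
          ring
        rw [hfw]
        exact mul_le_mul_of_nonneg_right hcg (by positivity)
      have h4 : ∫⁻ w in ball x 1,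
          ENNReal.ofReal c * ENNReal.ofReal (‖w - x‖⁻¹ * ‖w - x‖⁻¹) = ∞ := by
        rw [lintegral_const_mul' _ _ ENNReal.ofReal_ne_top]
        have hball : ball x 1 = (fun w : E2 => w - x) ⁻¹' (ball (0:E2) 1) := by
          ext w; simp [mem_ball, dist_eq_norm]
        rw [hball, lintegral_translate (ball (0:E2) 1) measurableSet_ball
          (fun u => ENNReal.ofReal (‖u‖⁻¹ * ‖u‖⁻¹)) x, lintegral_ball_inv_sq,
          ENNReal.mul_top (by simp [ENNReal.ofReal_eq_zero]; linarith)]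
      have h6 := setLIntegral_mono' (μ := volume) measurableSet_ball hlow
      rw [h4] at h6
      have h7 := le_trans h6 (setLIntegral_le_lintegral _ _)
      rw [top_le_iff.1 h7] at h1
      exact absurd h1 (by simp)
    rw [integral_undef hne]
    exact mul_nonneg hC0.le (by linarith)
  · have hd : 0 < ‖x - y‖ := norm_pos_iff.2 (sub_ne_zero.2 hxy)
    set s : ℝ := ‖x - y‖ / 2 with hsdef
    have hs0 : 0 < s := by positivity
    have hA : ∫⁻ w in ball y s, ENNReal.ofReal (f w) ≤ V := by
      have hb : ∀ w ∈ ball y s, ENNReal.ofReal (f w)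
          ≤ ENNReal.ofReal s⁻¹ * ENNReal.ofReal ‖w - y‖⁻¹ := by
        intro w hw
        rw [← ENNReal.ofReal_mul (by positivity)]
        apply ENNReal.ofReal_le_ofReal
        have hwy : ‖w - y‖ < s := by rw [← dist_eq_norm]; exact mem_ball.1 hw
        have hxw : s ≤ ‖x - w‖ := by
          have htri : ‖x - y‖ ≤ ‖x - w‖ + ‖w - y‖ := by
            calc ‖x - y‖ = ‖(x - w) + (w - y)‖ := by rw [sub_add_sub_cancel]
              _ ≤ _ := norm_add_le _ _
          rw [hsdef] at hwy ⊢
          linarith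
        have h1 : ‖x - w‖⁻¹ ≤ s⁻¹ := inv_anti₀ hs0 hxw
        calc f w ≤ 1 * (‖x - w‖⁻¹ * ‖w - y‖⁻¹) := by
              rw [hfdef]
              simp only
              rw [mul_assoc]
              exact mul_le_mul_of_nonneg_right (hg1 w) (by positivity)
          _ = ‖x - w‖⁻¹ * ‖w - y‖⁻¹ := one_mul _
          _ ≤ s⁻¹ * ‖w - y‖⁻¹ := mul_le_mul_of_nonneg_right h1 (by positivity)
      calc ∫⁻ w in ball y s, ENNReal.ofReal (f w)
          ≤ ∫⁻ w in ball y s, ENNReal.ofReal s⁻¹ * ENNReal.ofReal ‖w - y‖⁻¹ :=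
            setLIntegral_mono' measurableSet_ball hb
        _ = ENNReal.ofReal s⁻¹ * ∫⁻ w in ball y s, ENNReal.ofReal ‖w - y‖⁻¹ :=
            lintegral_const_mul' _ _ ENNReal.ofReal_ne_top
        _ = ENNReal.ofReal s⁻¹ * (V * ENNReal.ofReal s) := by
            have hball : ball y s = (fun w : E2 => w - y) ⁻¹' (ball (0:E2) s) := by
              ext w; simp [mem_ball, dist_eq_norm]
            rw [hball, lintegral_translate _ measurableSet_ball
              (fun u => ENNReal.ofReal ‖u‖⁻¹) y, lintegral_ball_inv_norm hs0]
        _ = V * (ENNReal.ofReal s⁻¹ * ENNReal.ofReal s) := by ring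
        _ = V := by rw [← ENNReal.ofReal_mul (by positivity), inv_mul_cancel₀ hs0.ne',
            ENNReal.ofReal_one, mul_one]
    have hB : ∫⁻ w in ball x s, ENNReal.ofReal (f w) ≤ V := by
      have hb : ∀ w ∈ ball x s, ENNReal.ofReal (f w)
          ≤ ENNReal.ofReal s⁻¹ * ENNReal.ofReal ‖w - x‖⁻¹ := by
        intro w hw
        rw [← ENNReal.ofReal_mul (by positivity)]
        apply ENNReal.ofReal_le_ofReal
        have hwx : ‖w - x‖ < s := by rw [← dist_eq_norm]; exact mem_ball.1 hw
        have hwy : s ≤ ‖w - y‖ := by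
          have htri : ‖x - y‖ ≤ ‖x - w‖ + ‖w - y‖ := by
            calc ‖x - y‖ = ‖(x - w) + (w - y)‖ := by rw [sub_add_sub_cancel]
              _ ≤ _ := norm_add_le _ _
          rw [norm_sub_rev x w] at htri
          rw [hsdef] at hwx ⊢
          linarith
        have h1 : ‖w - y‖⁻¹ ≤ s⁻¹ := inv_anti₀ hs0 hwy
        calc f w ≤ 1 * (‖x - w‖⁻¹ * ‖w - y‖⁻¹) := by
              rw [hfdef]
              simp only
              rw [mul_assoc]
              exact mul_le_mul_of_nonneg_right (hg1 w) (by positivity)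
          _ = ‖x - w‖⁻¹ * ‖w - y‖⁻¹ := one_mul _
          _ ≤ ‖x - w‖⁻¹ * s⁻¹ := mul_le_mul_of_nonneg_left h1 (by positivity)
          _ = s⁻¹ * ‖w - x‖⁻¹ := by rw [norm_sub_rev x w]; ring
      calc ∫⁻ w in ball x s, ENNReal.ofReal (f w)
          ≤ ∫⁻ w in ball x s, ENNReal.ofReal s⁻¹ * ENNReal.ofReal ‖w - x‖⁻¹ :=
            setLIntegral_mono' measurableSet_ball hb
        _ = ENNReal.ofReal s⁻¹ * ∫⁻ w in ball x s, ENNReal.ofReal ‖w - x‖⁻¹ :=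
            lintegral_const_mul' _ _ ENNReal.ofReal_ne_top
        _ = ENNReal.ofReal s⁻¹ * (V * ENNReal.ofReal s) := by
            have hball : ball x s = (fun w : E2 => w - x) ⁻¹' (ball (0:E2) s) := by
              ext w; simp [mem_ball, dist_eq_norm]
            rw [hball, lintegral_translate _ measurableSet_ball
              (fun u => ENNReal.ofReal ‖u‖⁻¹) x, lintegral_ball_inv_norm hs0]
        _ = V * (ENNReal.ofReal s⁻¹ * ENNReal.ofReal s) := by ring
        _ = V := by rw [← ENNReal.ofReal_mul (by positivity), inv_mul_cancel₀ hs0.ne',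
            ENNReal.ofReal_one, mul_one]
    have hz : ∀ z : E2, ∫⁻ w in {w : E2 | s ≤ ‖w - z‖},
        ENNReal.ofReal ((1 + ‖w‖ ^ 2) ^ (-(2 + ε) / 2) * (‖w - z‖⁻¹ * ‖w - z‖⁻¹))
        ≤ V * ENNReal.ofReal (Real.log s⁻¹) + Ct := by
      intro z
      have hnm : Measurable fun w : E2 => ‖w - z‖ :=
        (measurable_id.sub measurable_const).norm
      set S1 : Set E2 := {w : E2 | s ≤ ‖w - z‖ ∧ ‖w - z‖ < 1} with hS1def
      set S2 : Set E2 := {w : E2 | 1 ≤ ‖w - z‖} with hS2def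
      have hS1m : MeasurableSet S1 := by
        have : S1 = (fun w : E2 => ‖w - z‖) ⁻¹' (Ico s 1) := rfl
        rw [this]; exact measurableSet_Ico.preimage hnm
      have hS2m : MeasurableSet S2 := by
        have : S2 = (fun w : E2 => ‖w - z‖) ⁻¹' (Ici 1) := rfl
        rw [this]; exact measurableSet_Ici.preimage hnm
      have hsub : {w : E2 | s ≤ ‖w - z‖} ⊆ S1 ∪ S2 := by
        intro w hw
        rcases lt_or_ge ‖w - z‖ 1 with h | h
        · exact Or.inl ⟨hw, h⟩
        · exact Or.inr h
      calc ∫⁻ w in {w : E2 | s ≤ ‖w - z‖},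
            ENNReal.ofReal ((1 + ‖w‖ ^ 2) ^ (-(2 + ε) / 2) * (‖w - z‖⁻¹ * ‖w - z‖⁻¹))
          ≤ ∫⁻ w in S1 ∪ S2,
            ENNReal.ofReal ((1 + ‖w‖ ^ 2) ^ (-(2 + ε) / 2) * (‖w - z‖⁻¹ * ‖w - z‖⁻¹)) :=
            lintegral_mono_set hsub
        _ ≤ (∫⁻ w in S1,
              ENNReal.ofReal ((1 + ‖w‖ ^ 2) ^ (-(2 + ε) / 2) * (‖w - z‖⁻¹ * ‖w - z‖⁻¹)))
            + ∫⁻ w in S2,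
              ENNReal.ofReal ((1 + ‖w‖ ^ 2) ^ (-(2 + ε) / 2) * (‖w - z‖⁻¹ * ‖w - z‖⁻¹)) :=
            lintegral_union_le _ _ _
        _ ≤ V * ENNReal.ofReal (Real.log s⁻¹) + Ct := by
            apply add_le_add
            · have hb1 : ∀ w ∈ S1,
                  ENNReal.ofReal ((1 + ‖w‖ ^ 2) ^ (-(2 + ε) / 2) * (‖w - z‖⁻¹ * ‖w - z‖⁻¹))
                  ≤ ENNReal.ofReal (‖w - z‖⁻¹ * ‖w - z‖⁻¹) := fun w _ =>
                ENNReal.ofReal_le_ofReal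
                  (mul_le_of_le_one_left (by positivity) (hg1 w))
              refine le_trans (setLIntegral_mono' hS1m hb1) ?_
              have hset : S1 = (fun w : E2 => w - z) ⁻¹' {u : E2 | s ≤ ‖u‖ ∧ ‖u‖ < 1} := rfl
              rw [hset, lintegral_translate _ ?hm (fun u => ENNReal.ofReal (‖u‖⁻¹ * ‖u‖⁻¹)) z]
              case hm =>
                have : {u : E2 | s ≤ ‖u‖ ∧ ‖u‖ < 1} = (fun u : E2 => ‖u‖) ⁻¹' (Ico s 1) := rfl
                rw [this]; exact measurableSet_Ico.preimage measurable_norm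
              exact lintegral_annulus hs0
            · have hb2 : ∀ w ∈ S2,
                  ENNReal.ofReal ((1 + ‖w‖ ^ 2) ^ (-(2 + ε) / 2) * (‖w - z‖⁻¹ * ‖w - z‖⁻¹))
                  ≤ ENNReal.ofReal ((1 + ‖w‖ ^ 2) ^ (-(2 + ε) / 2)) := by
                intro w hw
                apply ENNReal.ofReal_le_ofReal
                have h1 : ‖w - z‖⁻¹ ≤ 1 := inv_le_one_of_one_le₀ hw
                have h2 : ‖w - z‖⁻¹ * ‖w - z‖⁻¹ ≤ 1 :=
                  mul_le_one₀ h1 (by positivity) h1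
                calc (1 + ‖w‖ ^ 2) ^ (-(2 + ε) / 2) * (‖w - z‖⁻¹ * ‖w - z‖⁻¹)
                    ≤ (1 + ‖w‖ ^ 2) ^ (-(2 + ε) / 2) * 1 :=
                      mul_le_mul_of_nonneg_left h2 (Real.rpow_nonneg (by positivity) _)
                  _ = _ := mul_one _
              refine le_trans (setLIntegral_mono' hS2m hb2) ?_
              rw [hCtdef]
              exact setLIntegral_le_lintegral _ _
    have hT : ∫⁻ w in (ball y s ∪ ball x s)ᶜ, ENNReal.ofReal (f w)
        ≤ 2 * (V * ENNReal.ofReal (Real.log s⁻¹) + Ct) := by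
      have hTm : MeasurableSet ((ball y s ∪ ball x s)ᶜ : Set E2) :=
        (measurableSet_ball.union measurableSet_ball).compl
      have hTx : ((ball y s ∪ ball x s)ᶜ : Set E2) ⊆ {w : E2 | s ≤ ‖w - x‖} := by
        intro w hw
        have hb : w ∉ ball x s := fun h => hw (Or.inr h)
        simpa [mem_ball, dist_eq_norm, not_lt] using hb
      have hTy : ((ball y s ∪ ball x s)ᶜ : Set E2) ⊆ {w : E2 | s ≤ ‖w - y‖} := by
        intro w hw
        have hb : w ∉ ball y s := fun h => hw (Or.inl h)
        simpa [mem_ball, dist_eq_norm, not_lt] using hb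
      have hb : ∀ w ∈ ((ball y s ∪ ball x s)ᶜ : Set E2), ENNReal.ofReal (f w) ≤
          ENNReal.ofReal ((1 + ‖w‖ ^ 2) ^ (-(2 + ε) / 2) * (‖w - x‖⁻¹ * ‖w - x‖⁻¹))
          + ENNReal.ofReal ((1 + ‖w‖ ^ 2) ^ (-(2 + ε) / 2) * (‖w - y‖⁻¹ * ‖w - y‖⁻¹)) := by
        intro w hw
        rw [← ENNReal.ofReal_add
          (mul_nonneg (Real.rpow_nonneg (by positivity) _) (by positivity))
          (mul_nonneg (Real.rpow_nonneg (by positivity) _) (by positivity))]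
        apply ENNReal.ofReal_le_ofReal
        have hax : 0 ≤ ‖w - x‖⁻¹ := by positivity
        have hay : 0 ≤ ‖w - y‖⁻¹ := by positivity
        have hAM : ‖w - x‖⁻¹ * ‖w - y‖⁻¹
            ≤ ‖w - x‖⁻¹ * ‖w - x‖⁻¹ + ‖w - y‖⁻¹ * ‖w - y‖⁻¹ := by
          nlinarith [sq_nonneg (‖w - x‖⁻¹ - ‖w - y‖⁻¹), mul_nonneg hax hay]
        have hfw : f w = (1 + ‖w‖ ^ 2) ^ (-(2 + ε) / 2) * (‖w - x‖⁻¹ * ‖w - y‖⁻¹) := by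
          rw [hfdef]
          simp only
          rw [norm_sub_rev x w]
          ring
        rw [hfw, ← mul_add]
        exact mul_le_mul_of_nonneg_left hAM (Real.rpow_nonneg (by positivity) _)
      calc ∫⁻ w in (ball y s ∪ ball x s)ᶜ, ENNReal.ofReal (f w)
          ≤ ∫⁻ w in (ball y s ∪ ball x s)ᶜ,
            (ENNReal.ofReal ((1 + ‖w‖ ^ 2) ^ (-(2 + ε) / 2) * (‖w - x‖⁻¹ * ‖w - x‖⁻¹))
            + ENNReal.ofReal ((1 + ‖w‖ ^ 2) ^ (-(2 + ε) / 2) * (‖w - y‖⁻¹ * ‖w - y‖⁻¹))) :=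
            setLIntegral_mono' hTm hb
        _ = (∫⁻ w in (ball y s ∪ ball x s)ᶜ,
              ENNReal.ofReal ((1 + ‖w‖ ^ 2) ^ (-(2 + ε) / 2) * (‖w - x‖⁻¹ * ‖w - x‖⁻¹)))
            + ∫⁻ w in (ball y s ∪ ball x s)ᶜ,
              ENNReal.ofReal ((1 + ‖w‖ ^ 2) ^ (-(2 + ε) / 2) * (‖w - y‖⁻¹ * ‖w - y‖⁻¹)) := by
            apply lintegral_add_left
            apply Measurable.ennreal_ofReal
            apply Measurable.mul
            · exact ((continuous_const.add (continuous_norm.pow 2)).rpow_const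
                (fun w : E2 => Or.inl (by positivity : (1 + ‖w‖ ^ 2 : ℝ) ≠ 0))).measurable
            · exact (((measurable_id.sub measurable_const).norm).inv).mul
                (((measurable_id.sub measurable_const).norm).inv)
        _ ≤ (V * ENNReal.ofReal (Real.log s⁻¹) + Ct)
            + (V * ENNReal.ofReal (Real.log s⁻¹) + Ct) :=
            add_le_add (le_trans (lintegral_mono_set hTx) (hz x))
              (le_trans (lintegral_mono_set hTy) (hz y))
        _ = 2 * (V * ENNReal.ofReal (Real.log s⁻¹) + Ct) := (two_mul _).symm
    have key : ∫⁻ w, ENNReal.ofReal (f w) ≤ K + 2 * V * ENNReal.ofReal m := by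
      have hsplit : ∫⁻ w, ENNReal.ofReal (f w) ≤
          ((∫⁻ w in ball y s, ENNReal.ofReal (f w))
            + ∫⁻ w in ball x s, ENNReal.ofReal (f w))
          + ∫⁻ w in (ball y s ∪ ball x s)ᶜ, ENNReal.ofReal (f w) := by
        calc ∫⁻ w, ENNReal.ofReal (f w)
            = ∫⁻ w in (ball y s ∪ ball x s) ∪ (ball y s ∪ ball x s)ᶜ,
                ENNReal.ofReal (f w) := by
              rw [union_compl_self, Measure.restrict_univ]
          _ ≤ (∫⁻ w in ball y s ∪ ball x s, ENNReal.ofReal (f w))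
              + ∫⁻ w in (ball y s ∪ ball x s)ᶜ, ENNReal.ofReal (f w) :=
              lintegral_union_le _ _ _
          _ ≤ _ := add_le_add_left (lintegral_union_le _ _ _) _
      have hlog : ENNReal.ofReal (Real.log s⁻¹)
          ≤ ENNReal.ofReal (Real.log 2) + ENNReal.ofReal m := by
        rw [← ENNReal.ofReal_add (Real.log_nonneg one_le_two) hm0]
        apply ENNReal.ofReal_le_ofReal
        have hls : Real.log s⁻¹ = Real.log 2 - Real.log ‖x - y‖ := by
          rw [Real.log_inv, hsdef, Real.log_div hd.ne' two_ne_zero]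
          ring
        have hmm : -Real.log ‖x - y‖ ≤ m := le_max_left _ _
        rw [hls]
        linarith
      calc ∫⁻ w, ENNReal.ofReal (f w)
          ≤ (V + V) + 2 * (V * ENNReal.ofReal (Real.log s⁻¹) + Ct) :=
            le_trans hsplit (add_le_add (add_le_add hA hB) hT)
        _ ≤ (V + V) + 2 * (V * (ENNReal.ofReal (Real.log 2) + ENNReal.ofReal m) + Ct) := by
            gcongr
        _ = K + 2 * V * ENNReal.ofReal m := by
            rw [hKdef]
            ring
    have hint : ∫ w, f w = (∫⁻ w, ENNReal.ofReal (f w)).toReal :=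
      integral_eq_lintegral_of_nonneg_ae (ae_of_all _ hf0) hfm.aestronglyMeasurable
    rw [hint]
    have h2Vtop : 2 * V * ENNReal.ofReal m ≠ ∞ :=
      ENNReal.mul_ne_top (ENNReal.mul_ne_top (by norm_num) hVtop) ENNReal.ofReal_ne_top
    have hRHStop : K + 2 * V * ENNReal.ofReal m ≠ ∞ := ENNReal.add_ne_top.2 ⟨hKtop, h2Vtop⟩
    calc (∫⁻ w, ENNReal.ofReal (f w)).toReal
        ≤ (K + 2 * V * ENNReal.ofReal m).toReal := ENNReal.toReal_mono hRHStop key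
      _ = K.toReal + (2 * V).toReal * m := by
          rw [ENNReal.toReal_add hKtop h2Vtop, ENNReal.toReal_mul (a := 2 * V),
            ENNReal.toReal_ofReal hm0]
      _ ≤ C * (1 + m) := by
          have h1 : K.toReal ≤ C := by
            rw [hCdef]
            have := ENNReal.toReal_nonneg (a := 2 * V)
            linarith
          have h2 : (2 * V).toReal ≤ C := by
            rw [hCdef]
            have := ENNReal.toReal_nonneg (a := K)
            linarith
          nlinarith [mul_le_mul_of_nonneg_right h2 hm0]
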